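/- Let G be a cubic graph and M1, M2 disjoint matchings with |M1 ∪ M2| maximum over all pairs of disjoint matchings of G. Then G − M1 − M2 contains no path with four edges. -/

import Mathlib

open SimpleGraph

/-- A matching in `G` given as a set of edges: edges of `G`, pairwise vertex-disjoint. -/
def IsMatchingSet {V : Type*} (G : SimpleGraph V) (M : Set (Sym2 V)) : Prop :=
  M ⊆ G.edgeSet ∧ ∀ e ∈ M, ∀ f ∈ M, e ≠ f → ∀ v, v ∈ e → v ∉ f

/-- `M1, M2` are disjoint matchings of `G` with `|M1 ∪ M2|` maximum over all pairs of
disjoint matchings of `G`. -/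
def MaxDisjointPair {V : Type*} (G : SimpleGraph V) (M1 M2 : Set (Sym2 V)) : Prop :=
  IsMatchingSet G M1 ∧ IsMatchingSet G M2 ∧ Disjoint M1 M2 ∧
  ∀ N1 N2 : Set (Sym2 V), IsMatchingSet G N1 → IsMatchingSet G N2 → Disjoint N1 N2 →
    (N1 ∪ N2).ncard ≤ (M1 ∪ M2).ncard

/-- Adjacency in `Ĝ = G − M1 − M2`: adjacency via an edge of `G` not in `M1 ∪ M2`. -/
def hatAdj {V : Type*} (G : SimpleGraph V) (M1 M2 : Set (Sym2 V)) (x y : V) : Prop :=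
  G.Adj x y ∧ s(x, y) ∉ M1 ∪ M2

section Aux

variable {V : Type*}

lemma sym2_eq_of_mem {x y : V} {e : Sym2 V} (hx : x ∈ e) (hy : y ∈ e) (h : x ≠ y) :
    e = s(x, y) := (Sym2.mem_and_mem_iff h).mp ⟨hx, hy⟩

lemma matching_mono {G : SimpleGraph V} {M N : Set (Sym2 V)} (hNM : N ⊆ M)
    (hM : IsMatchingSet G M) : IsMatchingSet G N :=
  ⟨fun e he => hM.1 (hNM he), fun e he f hf => hM.2 e (hNM he) f (hNM hf)⟩

lemma matching_unique {G : SimpleGraph V} {M : Set (Sym2 V)} (hM : IsMatchingSet G M)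
    {e f : Sym2 V} {x : V} (he : e ∈ M) (hf : f ∈ M) (hx : x ∈ e) (hx' : x ∈ f) : e = f := by
  by_contra hne
  exact hM.2 e he f hf hne x hx hx'

lemma insert_matching {G : SimpleGraph V} {M : Set (Sym2 V)} (hM : IsMatchingSet G M)
    {x y : V} (hxy : G.Adj x y) (hx : ∀ g ∈ M, x ∉ g) (hy : ∀ g ∈ M, y ∉ g) :
    IsMatchingSet G (insert s(x, y) M) := by
  constructor
  · exact Set.insert_subset (G.mem_edgeSet.mpr hxy) hM.1
  · intro e he f hf hne v hve hvf
    rcases Set.mem_insert_iff.mp he with rfl | he <;> rcases Set.mem_insert_iff.mp hf with rfl | hf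
    · exact hne rfl
    · rcases Sym2.mem_iff.mp hve with h | h
      · exact hx f hf (h ▸ hvf)
      · exact hy f hf (h ▸ hvf)
    · rcases Sym2.mem_iff.mp hvf with h | h
      · exact hx e he (h ▸ hve)
      · exact hy e he (h ▸ hve)
    · exact hM.2 e he f hf hne v hve hvf

lemma no_improve [Fintype V] {G : SimpleGraph V} {M1 M2 : Set (Sym2 V)}
    (hm : ∀ N1 N2 : Set (Sym2 V), IsMatchingSet G N1 → IsMatchingSet G N2 → Disjoint N1 N2 →
      (N1 ∪ N2).ncard ≤ (M1 ∪ M2).ncard)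
    {N1 N2 : Set (Sym2 V)} (h1 : IsMatchingSet G N1) (h2 : IsMatchingSet G N2)
    (hd : Disjoint N1 N2) {g : Sym2 V} (hg : g ∉ M1 ∪ M2)
    (hu : N1 ∪ N2 = insert g (M1 ∪ M2)) : False := by
  have h := hm N1 N2 h1 h2 hd
  rw [hu, Set.ncard_insert_of_notMem hg (Set.toFinite _)] at h
  omega

lemma add_edge [Fintype V] {G : SimpleGraph V} {M1 M2 : Set (Sym2 V)}
    (h1 : IsMatchingSet G M1) (h2 : IsMatchingSet G M2) (hd : Disjoint M1 M2)
    (hm : ∀ N1 N2 : Set (Sym2 V), IsMatchingSet G N1 → IsMatchingSet G N2 → Disjoint N1 N2 →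
      (N1 ∪ N2).ncard ≤ (M1 ∪ M2).ncard)
    {x y : V} (hxy : G.Adj x y) (hn1 : s(x, y) ∉ M1) (hn2 : s(x, y) ∉ M2)
    (hx : ¬ ∃ e ∈ M1, x ∈ e) (hy : ¬ ∃ e ∈ M1, y ∈ e) : False := by
  refine no_improve hm (N1 := insert s(x, y) M1) (N2 := M2) ?_ h2 ?_
    (g := s(x, y)) (fun h => h.elim hn1 hn2) Set.insert_union
  · exact insert_matching h1 hxy (fun g hg hxg => hx ⟨g, hg, hxg⟩) (fun g hg hyg => hy ⟨g, hg, hyg⟩)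
  · rw [Set.disjoint_left]
    intro g hg
    rcases Set.mem_insert_iff.mp hg with rfl | hg
    · exact hn2
    · exact Set.disjoint_left.mp hd hg

end Aux

section Walks

variable {V : Type*} (G' : SimpleGraph V)

lemma firstStep {x w : V} (t : G'.Walk x w) (hxw : x ≠ w) :
    ∃ (d : V) (h : G'.Adj x d) (t₂ : G'.Walk d w), t = Walk.cons h t₂ := by
  cases t with
  | nil => exact absurd rfl hxw
  | cons h t₂ => exact ⟨_, h, t₂, rfl⟩

lemma pre (hdeg : ∀ w a b c : V, G'.Adj w a → G'.Adj w b → G'.Adj w c → a = b ∨ a = c ∨ b = c) :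
    ∀ {x y : V} (p : G'.Walk x y), p.IsPath → ∀ {z : V} (q : G'.Walk x z), q.IsPath →
      ∀ v : V, (∀ a b, G'.Adj x a → G'.Adj x b → a ≠ v → b ≠ v → a = b) →
      v ∉ p.support.tail → v ∉ q.support.tail →
      (∃ r : G'.Walk y z, q = p.append r) ∨ (∃ r : G'.Walk z y, p = q.append r) := by
  intro x y p
  induction p with
  | nil =>
    intro _ z q hq v _ _ _
    exact Or.inl ⟨q, by simp⟩
  | @cons x a y h p₂ ih =>
    intro hp z q hq v hfirst hvp hvq
    cases q with
    | nil => exact Or.inr ⟨Walk.cons h p₂, by simp⟩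
    | @cons _ b _ h' q₂ =>
      have ha : a ≠ v := by
        intro hav
        apply hvp
        rw [Walk.support_cons, List.tail_cons, ← hav]
        exact p₂.start_mem_support
      have hb : b ≠ v := by
        intro hbv
        apply hvq
        rw [Walk.support_cons, List.tail_cons, ← hbv]
        exact q₂.start_mem_support
      obtain rfl : a = b := hfirst a b h h' ha hb
      obtain ⟨hp₂, hxp₂⟩ := (Walk.cons_isPath_iff h p₂).mp hp
      obtain ⟨hq₂, hxq₂⟩ := (Walk.cons_isPath_iff h' q₂).mp hq
      have hfirst' : ∀ a' b', G'.Adj a a' → G'.Adj a b' → a' ≠ x → b' ≠ x → a' = b' := by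
        intro a' b' h1' h2' h3' h4'
        rcases hdeg a a' b' x h1' h2' h.symm with h5 | h5 | h5
        · exact h5
        · exact absurd h5 h3'
        · exact absurd h5 h4'
      rcases ih hp₂ q₂ hq₂ x hfirst'
          (fun hx => hxp₂ (List.mem_of_mem_tail hx))
          (fun hx => hxq₂ (List.mem_of_mem_tail hx)) with ⟨r, hr⟩ | ⟨r, hr⟩
      · exact Or.inl ⟨r, by rw [Walk.cons_append, ← hr]⟩
      · exact Or.inr ⟨r, by rw [Walk.cons_append, ← hr]⟩

lemma noext {w x y : V} (s : G'.Walk w x) (r : G'.Walk x y)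
    (hpath : (s.append r).IsPath) (hwx : w ≠ x) (hxy : x ≠ y)
    (Px : ∀ a b, G'.Adj x a → G'.Adj x b → a = b) : False := by
  obtain ⟨c, hxc, r₂, rfl⟩ := firstStep G' r hxy
  obtain ⟨d, hxd, t₂, hts⟩ := firstStep G' s.reverse (Ne.symm hwx)
  have hcd : c = d := Px c d hxc hxd
  have hd_s : d ∈ s.support := by
    have hmem : d ∈ s.reverse.support := by
      rw [hts, Walk.support_cons]
      exact List.mem_cons_of_mem _ t₂.start_mem_support
    rwa [Walk.support_reverse, List.mem_reverse] at hmem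
  have hnod := hpath.support_nodup
  rw [Walk.support_append, Walk.support_cons, List.tail_cons] at hnod
  exact (List.nodup_append'.mp hnod).2.2 hd_s (hcd ▸ r₂.start_mem_support)

lemma three_pendant
    (hdeg : ∀ w a b c : V, G'.Adj w a → G'.Adj w b → G'.Adj w c → a = b ∨ a = c ∨ b = c)
    {u2 u3 u4 : V} (h23 : u2 ≠ u3) (h24 : u2 ≠ u4) (h34 : u3 ≠ u4)
    (P2 : ∀ a b, G'.Adj u2 a → G'.Adj u2 b → a = b)
    (P3 : ∀ a b, G'.Adj u3 a → G'.Adj u3 b → a = b)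
    (P4 : ∀ a b, G'.Adj u4 a → G'.Adj u4 b → a = b)
    (r23 : G'.Reachable u2 u3) (r24 : G'.Reachable u2 u4) : False := by
  classical
  obtain ⟨w23⟩ := r23
  obtain ⟨w24⟩ := r24
  set p := w23.toPath with hp
  set q := w24.toPath with hq
  have hu2p : u2 ∉ (p : G'.Walk u2 u3).support.tail := by
    have hn := p.2.support_nodup
    rw [Walk.support_eq_cons] at hn
    exact (List.nodup_cons.mp hn).1
  have hu2q : u2 ∉ (q : G'.Walk u2 u4).support.tail := by
    have hn := q.2.support_nodup
    rw [Walk.support_eq_cons] at hn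
    exact (List.nodup_cons.mp hn).1
  rcases pre G' hdeg (p : G'.Walk u2 u3) p.2 (q : G'.Walk u2 u4) q.2 u2
      (fun a b haa hbb _ _ => P2 a b haa hbb) hu2p hu2q with ⟨r, hr⟩ | ⟨r, hr⟩
  · exact noext G' (p : G'.Walk u2 u3) r (hr ▸ q.2) h23 h34 P3
  · exact noext G' (q : G'.Walk u2 u4) r (hr ▸ p.2) h24 (Ne.symm h34) P4

end Walks

section Flip
variable {V : Type*}

/-- Step relation between edges of `H`: both in `H` and sharing a vertex. -/
def EStep (H : Set (Sym2 V)) (e f : Sym2 V) : Prop :=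
  e ∈ H ∧ f ∈ H ∧ ∃ v, v ∈ e ∧ v ∈ f

lemma reach_to {H : Set (Sym2 V)} {e0 f : Sym2 V}
    (h : Relation.ReflTransGen (EStep H) e0 f) {u : V} (hu : u ∈ e0) (he0 : e0 ∈ H) :
    ∀ v ∈ f, (fromEdgeSet H).Reachable u v := by
  induction h with
  | refl =>
    intro v hv
    by_cases huv : u = v
    · exact huv ▸ Reachable.refl u
    · exact Adj.reachable ((fromEdgeSet_adj H).mpr ⟨(sym2_eq_of_mem hu hv huv) ▸ he0, huv⟩)
  | tail _hst hstep ih =>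
    obtain ⟨hfH, hf'H, v0, hv0f, hv0f'⟩ := hstep
    intro v hv
    have R := ih v0 hv0f
    by_cases hvv : v0 = v
    · exact hvv ▸ R
    · exact R.trans (Adj.reachable ((fromEdgeSet_adj H).mpr
        ⟨(sym2_eq_of_mem hv0f' hv hvv) ▸ hf'H, hvv⟩))

lemma flip_half {G : SimpleGraph V} {M1 M2 : Set (Sym2 V)}
    (h1 : IsMatchingSet G M1) (h2 : IsMatchingSet G M2) (C : Set (Sym2 V))
    (hclosed : ∀ e f, e ∈ M1 ∪ M2 → f ∈ C → (∃ v, v ∈ e ∧ v ∈ f) → e ∈ C) :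
    IsMatchingSet G ((M1 \ C) ∪ (M2 ∩ C)) := by
  constructor
  · rintro e (⟨he, -⟩ | ⟨he, -⟩)
    · exact h1.1 he
    · exact h2.1 he
  · rintro e (⟨he, heC⟩ | ⟨he, heC⟩) f (⟨hf, hfC⟩ | ⟨hf, hfC⟩) hne v hve hvf
    · exact h1.2 e he f hf hne v hve hvf
    · exact heC (hclosed e f (Or.inl he) hfC ⟨v, hve, hvf⟩)
    · exact hfC (hclosed f e (Or.inl hf) heC ⟨v, hvf, hve⟩)
    · exact h2.2 e he f hf hne v hve hvf

lemma flip_union {M1 M2 C : Set (Sym2 V)} :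
    ((M1 \ C) ∪ (M2 ∩ C)) ∪ ((M2 \ C) ∪ (M1 ∩ C)) = M1 ∪ M2 := by
  ext g
  simp only [Set.mem_union, Set.mem_diff, Set.mem_inter_iff]
  tauto

lemma flip_disjoint {M1 M2 C : Set (Sym2 V)} (hd : Disjoint M1 M2) :
    Disjoint ((M1 \ C) ∪ (M2 ∩ C)) ((M2 \ C) ∪ (M1 ∩ C)) := by
  rw [Set.disjoint_left]
  rintro g (⟨hg, hgC⟩ | ⟨hg, hgC⟩) (⟨hg', hgC'⟩ | ⟨hg', hgC'⟩)
  · exact Set.disjoint_left.mp hd hg hg'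
  · exact hgC hgC'
  · exact hgC' hgC
  · exact Set.disjoint_left.mp hd hg' hg

lemma not_both_cover [Fintype V] {G : SimpleGraph V} [DecidableRel G.Adj]
    (hcubic : ∀ v : V, G.degree v = 3) {M1 M2 : Set (Sym2 V)}
    (h1 : IsMatchingSet G M1) (h2 : IsMatchingSet G M2) (hd : Disjoint M1 M2)
    {x p q : V} (hp : G.Adj x p) (hq : G.Adj x q) (hpq : p ≠ q)
    (hpH : s(x, p) ∉ M1 ∪ M2) (hqH : s(x, q) ∉ M1 ∪ M2)
    {e f : Sym2 V} (he : e ∈ M1) (hf : f ∈ M2) (hxe : x ∈ e) (hxf : x ∈ f) : False := by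
  classical
  obtain ⟨we, rfl⟩ := (Sym2.mem_iff_exists).mp hxe
  obtain ⟨wf, rfl⟩ := (Sym2.mem_iff_exists).mp hxf
  have hadje : G.Adj x we := G.mem_edgeSet.mp (h1.1 he)
  have hadjf : G.Adj x wf := G.mem_edgeSet.mp (h2.1 hf)
  have hwep : we ≠ p := fun h => hpH (Or.inl (h ▸ he))
  have hweq : we ≠ q := fun h => hqH (Or.inl (h ▸ he))
  have hwfp : wf ≠ p := fun h => hpH (Or.inr (h ▸ hf))
  have hwfq : wf ≠ q := fun h => hqH (Or.inr (h ▸ hf))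
  have hwewf : we ≠ wf := by
    rintro rfl
    exact Set.disjoint_left.mp hd he hf
  have hsub : ({p, q, we, wf} : Finset V) ⊆ G.neighborFinset x := by
    intro a ha
    simp only [Finset.mem_insert, Finset.mem_singleton] at ha
    rw [SimpleGraph.mem_neighborFinset]
    rcases ha with rfl | rfl | rfl | rfl
    · exact hp
    · exact hq
    · exact hadje
    · exact hadjf
  have hcard : ({p, q, we, wf} : Finset V).card = 4 := by
    rw [Finset.card_insert_of_notMem (by simp [hpq, hwep.symm, hwfp.symm]),
        Finset.card_insert_of_notMem (by simp [hweq.symm, hwfq.symm]),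
        Finset.card_insert_of_notMem (by simp [hwewf]), Finset.card_singleton]
  have hle := Finset.card_le_card hsub
  rw [hcard, ← SimpleGraph.degree, hcubic] at hle
  omega

end Flip

lemma key {V : Type*} [Fintype V] (G : SimpleGraph V) [DecidableRel G.Adj]
    (hcubic : ∀ v : V, G.degree v = 3) (M1 M2 : Set (Sym2 V))
    (h1 : IsMatchingSet G M1) (h2 : IsMatchingSet G M2) (hd : Disjoint M1 M2)
    (hm : ∀ N1 N2 : Set (Sym2 V), IsMatchingSet G N1 → IsMatchingSet G N2 → Disjoint N1 N2 →
      (N1 ∪ N2).ncard ≤ (M1 ∪ M2).ncard)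
    {u1 u2 u3 u4 u5 : V}
    (h13 : u1 ≠ u3) (h23 : u2 ≠ u3) (h24 : u2 ≠ u4) (h34 : u3 ≠ u4) (h35 : u3 ≠ u5)
    (a12 : G.Adj u1 u2) (b12 : s(u1, u2) ∉ M1 ∪ M2)
    (a23 : G.Adj u2 u3) (b23 : s(u2, u3) ∉ M1 ∪ M2)
    (a34 : G.Adj u3 u4) (b34 : s(u3, u4) ∉ M1 ∪ M2)
    (a45 : G.Adj u4 u5) (b45 : s(u4, u5) ∉ M1 ∪ M2)
    (hu3 : ¬ ∃ e ∈ M1, u3 ∈ e) : False := by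
  classical
  have hm2 : ∀ N1 N2 : Set (Sym2 V), IsMatchingSet G N1 → IsMatchingSet G N2 → Disjoint N1 N2 →
      (N1 ∪ N2).ncard ≤ (M2 ∪ M1).ncard := by
    intro N1 N2 a b c
    rw [Set.union_comm M2 M1]
    exact hm N1 N2 a b c
  have c1u2 : ∃ e ∈ M1, u2 ∈ e := by
    by_contra hcon
    exact add_edge h1 h2 hd hm a23 (fun h => b23 (Or.inl h)) (fun h => b23 (Or.inr h)) hcon hu3
  obtain ⟨e2, he2M, hu2e2⟩ := c1u2
  have c1u4 : ∃ e ∈ M1, u4 ∈ e := by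
    by_contra hcon
    exact add_edge h1 h2 hd hm a34 (fun h => b34 (Or.inl h)) (fun h => b34 (Or.inr h)) hu3 hcon
  obtain ⟨e4, he4M, hu4e4⟩ := c1u4
  have nc2u2 : ¬ ∃ f ∈ M2, u2 ∈ f := by
    rintro ⟨f, hf, hu2f⟩
    refine not_both_cover hcubic h1 h2 hd a12.symm a23 h13 ?_ b23 he2M hf hu2e2 hu2f
    rw [Sym2.eq_swap]
    exact b12
  have nc2u4 : ¬ ∃ f ∈ M2, u4 ∈ f := by
    rintro ⟨f, hf, hu4f⟩
    refine not_both_cover hcubic h1 h2 hd a34.symm a45 h35 ?_ b45 he4M hf hu4e4 hu4f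
    rw [Sym2.eq_swap]
    exact b34
  have c2u3 : ∃ f ∈ M2, u3 ∈ f := by
    by_contra hcon
    exact add_edge h2 h1 hd.symm hm2 a23 (fun h => b23 (Or.inr h)) (fun h => b23 (Or.inl h))
      nc2u2 hcon
  obtain ⟨f3, hf3M, hu3f3⟩ := c2u3
  have uniq1u2 : ∀ e ∈ M1, u2 ∈ e → e = e2 := fun e he hu => matching_unique h1 he he2M hu hu2e2
  have uniq1u4 : ∀ e ∈ M1, u4 ∈ e → e = e4 := fun e he hu => matching_unique h1 he he4M hu hu4e4
  have uniq2u3 : ∀ f ∈ M2, u3 ∈ f → f = f3 := fun f hf hu => matching_unique h2 hf hf3M hu hu3f3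
  by_cases hee : e2 = e4
  · -- `e2 = e4 = s(u2, u4)`: local improvement
    have hu4e2 : u4 ∈ e2 := hee ▸ hu4e4
    have he2eq : e2 = s(u2, u4) := sym2_eq_of_mem hu2e2 hu4e2 h24
    have hN1 : IsMatchingSet G (insert s(u2, u3) (M1 \ {e2})) := by
      apply insert_matching (matching_mono Set.diff_subset h1) a23
      · rintro g ⟨hg, hgne⟩ hu2g
        exact hgne (uniq1u2 g hg hu2g)
      · rintro g ⟨hg, -⟩ hu3g
        exact hu3 ⟨g, hg, hu3g⟩
    have hN2 : IsMatchingSet G (insert e2 M2) := by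
      rw [he2eq]
      apply insert_matching h2 (G.mem_edgeSet.mp (he2eq ▸ h1.1 he2M))
      · exact fun g hg hu2g => nc2u2 ⟨g, hg, hu2g⟩
      · exact fun g hg hu4g => nc2u4 ⟨g, hg, hu4g⟩
    refine no_improve hm hN1 hN2 ?_ (g := s(u2, u3)) b23 ?_
    · rw [Set.disjoint_left]
      rintro g hg hg'
      rcases Set.mem_insert_iff.mp hg with rfl | ⟨hg1, hgne⟩
      · rcases Set.mem_insert_iff.mp hg' with h | h
        · rw [he2eq] at h
          exact h34 (Sym2.congr_right.mp h)
        · exact b23 (Or.inr h)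
      · rcases Set.mem_insert_iff.mp hg' with h | h
        · exact hgne h
        · exact Set.disjoint_left.mp hd hg1 h
    · ext g
      simp only [Set.mem_union, Set.mem_insert_iff, Set.mem_diff, Set.mem_singleton_iff]
      constructor
      · rintro ((h | ⟨h, -⟩) | (rfl | h))
        · exact Or.inl h
        · exact Or.inr (Or.inl h)
        · exact Or.inr (Or.inl he2M)
        · exact Or.inr (Or.inr h)
      · rintro (h | (h | h))
        · exact Or.inl (Or.inl h)
        · by_cases hge : g = e2
          · exact Or.inr (Or.inl hge)
          · exact Or.inl (Or.inr ⟨h, hge⟩)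
        · exact Or.inr (Or.inr h)
  · -- `e2 ≠ e4`: component-flip argument
    have hH : (M1 ∪ M2 : Set (Sym2 V)) = M1 ∪ M2 := rfl
    set C : Set (Sym2 V) :=
      {f | Relation.ReflTransGen (EStep (M1 ∪ M2)) e2 f ∧ f ∈ M1 ∪ M2} with hCdef
    have he2H : e2 ∈ M1 ∪ M2 := Or.inl he2M
    have he2C : e2 ∈ C := ⟨Relation.ReflTransGen.refl, he2H⟩
    have hclosed : ∀ e f, e ∈ M1 ∪ M2 → f ∈ C → (∃ v, v ∈ e ∧ v ∈ f) → e ∈ C := by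
      rintro e f he ⟨hr, hfH⟩ ⟨v, hve, hvf⟩
      exact ⟨hr.tail ⟨hfH, he, v, hvf, hve⟩, he⟩
    have hN1 := flip_half h1 h2 C hclosed
    have hclosed' : ∀ e f, e ∈ M2 ∪ M1 → f ∈ C → (∃ v, v ∈ e ∧ v ∈ f) → e ∈ C := by
      rintro e f he hf hv
      refine hclosed e f ?_ hf hv
      rcases he with h | h
      · exact Or.inr h
      · exact Or.inl h
    have hN2 := flip_half h2 h1 C hclosed'
    have hdisU := flip_disjoint (C := C) hd
    have hU : ((M1 \ C) ∪ (M2 ∩ C)) ∪ ((M2 \ C) ∪ (M1 ∩ C)) = M1 ∪ M2 := flip_union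
    have ncov1'u2 : ∀ g ∈ (M1 \ C) ∪ (M2 ∩ C), u2 ∉ g := by
      rintro g (⟨hg, hgC⟩ | ⟨hg, -⟩) hu2g
      · exact hgC (by rw [uniq1u2 g hg hu2g]; exact he2C)
      · exact nc2u2 ⟨g, hg, hu2g⟩
    by_cases hf3C : f3 ∈ C
    · by_cases he4C : e4 ∈ C
      · -- three pendant vertices in one component: impossible
        have P2 : ∀ a b, (fromEdgeSet (M1 ∪ M2)).Adj u2 a →
            (fromEdgeSet (M1 ∪ M2)).Adj u2 b → a = b := by
          have huniqH : ∀ a, (fromEdgeSet (M1 ∪ M2)).Adj u2 a → s(u2, a) = e2 := by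
            intro a ha
            obtain ⟨haH, -⟩ := (fromEdgeSet_adj _).mp ha
            rcases haH with h | h
            · exact uniq1u2 _ h (Sym2.mem_mk_left _ _)
            · exact absurd ⟨_, h, Sym2.mem_mk_left _ _⟩ nc2u2
          intro a b ha hb
          exact Sym2.congr_right.mp ((huniqH a ha).trans (huniqH b hb).symm)
        have P4 : ∀ a b, (fromEdgeSet (M1 ∪ M2)).Adj u4 a →
            (fromEdgeSet (M1 ∪ M2)).Adj u4 b → a = b := by
          have huniqH : ∀ a, (fromEdgeSet (M1 ∪ M2)).Adj u4 a → s(u4, a) = e4 := by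
            intro a ha
            obtain ⟨haH, -⟩ := (fromEdgeSet_adj _).mp ha
            rcases haH with h | h
            · exact uniq1u4 _ h (Sym2.mem_mk_left _ _)
            · exact absurd ⟨_, h, Sym2.mem_mk_left _ _⟩ nc2u4
          intro a b ha hb
          exact Sym2.congr_right.mp ((huniqH a ha).trans (huniqH b hb).symm)
        have P3 : ∀ a b, (fromEdgeSet (M1 ∪ M2)).Adj u3 a →
            (fromEdgeSet (M1 ∪ M2)).Adj u3 b → a = b := by
          have huniqH : ∀ a, (fromEdgeSet (M1 ∪ M2)).Adj u3 a → s(u3, a) = f3 := by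
            intro a ha
            obtain ⟨haH, -⟩ := (fromEdgeSet_adj _).mp ha
            rcases haH with h | h
            · exact absurd ⟨_, h, Sym2.mem_mk_left _ _⟩ hu3
            · exact uniq2u3 _ h (Sym2.mem_mk_left _ _)
          intro a b ha hb
          exact Sym2.congr_right.mp ((huniqH a ha).trans (huniqH b hb).symm)
        have sm : ∀ (M : Set (Sym2 V)), IsMatchingSet G M → ∀ (w a b : V),
            s(w, a) ∈ M → s(w, b) ∈ M → a = b := by
          intro M hM w a b ha hb
          by_contra hne
          have hne' : s(w, a) ≠ s(w, b) := fun h => hne (Sym2.congr_right.mp h)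
          exact hM.2 _ ha _ hb hne' w (Sym2.mem_mk_left _ _) (Sym2.mem_mk_left _ _)
        have hdeg : ∀ w a b c : V, (fromEdgeSet (M1 ∪ M2)).Adj w a →
            (fromEdgeSet (M1 ∪ M2)).Adj w b → (fromEdgeSet (M1 ∪ M2)).Adj w c →
            a = b ∨ a = c ∨ b = c := by
          intro w a b c ha hb hc
          obtain ⟨haH, -⟩ := (fromEdgeSet_adj _).mp ha
          obtain ⟨hbH, -⟩ := (fromEdgeSet_adj _).mp hb
          obtain ⟨hcH, -⟩ := (fromEdgeSet_adj _).mp hc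
          rcases haH with ha1 | ha1 <;> rcases hbH with hb1 | hb1 <;> rcases hcH with hc1 | hc1
          · exact Or.inl (sm M1 h1 w a b ha1 hb1)
          · exact Or.inl (sm M1 h1 w a b ha1 hb1)
          · exact Or.inr (Or.inl (sm M1 h1 w a c ha1 hc1))
          · exact Or.inr (Or.inr (sm M2 h2 w b c hb1 hc1))
          · exact Or.inr (Or.inr (sm M1 h1 w b c hb1 hc1))
          · exact Or.inr (Or.inl (sm M2 h2 w a c ha1 hc1))
          · exact Or.inl (sm M2 h2 w a b ha1 hb1)
          · exact Or.inl (sm M2 h2 w a b ha1 hb1)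
        have r23 : (fromEdgeSet (M1 ∪ M2)).Reachable u2 u3 :=
          reach_to hf3C.1 hu2e2 he2H u3 hu3f3
        have r24 : (fromEdgeSet (M1 ∪ M2)).Reachable u2 u4 :=
          reach_to he4C.1 hu2e2 he2H u4 hu4e4
        exact three_pendant (fromEdgeSet (M1 ∪ M2)) hdeg h23 h24 h34 P2 P3 P4 r23 r24
      · -- `f3 ∈ C`, `e4 ∉ C`: flip `C` and add `s(u3, u4)` to the second matching
        have ncov2'u3 : ∀ g ∈ (M2 \ C) ∪ (M1 ∩ C), u3 ∉ g := by
          rintro g (⟨hg, hgC⟩ | ⟨hg, -⟩) hu3g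
          · exact hgC (by rw [uniq2u3 g hg hu3g]; exact hf3C)
          · exact hu3 ⟨g, hg, hu3g⟩
        have ncov2'u4 : ∀ g ∈ (M2 \ C) ∪ (M1 ∩ C), u4 ∉ g := by
          rintro g (⟨hg, -⟩ | ⟨hg, hgC⟩) hu4g
          · exact nc2u4 ⟨g, hg, hu4g⟩
          · exact he4C ((uniq1u4 g hg hu4g) ▸ hgC)
        have hN2' : IsMatchingSet G (insert s(u3, u4) ((M2 \ C) ∪ (M1 ∩ C))) :=
          insert_matching hN2 a34 ncov2'u3 ncov2'u4
        refine no_improve hm hN1 hN2' ?_ (g := s(u3, u4)) b34 ?_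
        · rw [Set.disjoint_right]
          rintro g hg
          rcases Set.mem_insert_iff.mp hg with rfl | hg
          · intro hmem
            apply b34
            rcases hmem with ⟨h, -⟩ | ⟨h, -⟩
            · exact Or.inl h
            · exact Or.inr h
          · exact fun hmem => Set.disjoint_left.mp hdisU hmem hg
        · rw [Set.union_insert, hU]
    · -- `f3 ∉ C`: flip `C` and add `s(u2, u3)` to the first matching
      have ncov1'u3 : ∀ g ∈ (M1 \ C) ∪ (M2 ∩ C), u3 ∉ g := by
        rintro g (⟨hg, -⟩ | ⟨hg, hgC⟩) hu3g
        · exact hu3 ⟨g, hg, hu3g⟩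
        · exact hf3C ((uniq2u3 g hg hu3g) ▸ hgC)
      have hN1' : IsMatchingSet G (insert s(u2, u3) ((M1 \ C) ∪ (M2 ∩ C))) :=
        insert_matching hN1 a23 ncov1'u2 ncov1'u3
      refine no_improve hm hN1' hN2 ?_ (g := s(u2, u3)) b23 ?_
      · rw [Set.disjoint_left]
        rintro g hg
        rcases Set.mem_insert_iff.mp hg with rfl | hg
        · intro hmem
          apply b23
          rcases hmem with ⟨h, -⟩ | ⟨h, -⟩
          · exact Or.inr h
          · exact Or.inl h
        · exact Set.disjoint_left.mp hdisU hg
      · rw [Set.insert_union, hU]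

theorem stmt5 {V : Type*} [Fintype V] (G : SimpleGraph V) [DecidableRel G.Adj]
    (hcubic : ∀ v : V, G.degree v = 3) (M1 M2 : Set (Sym2 V))
    (hmax : MaxDisjointPair G M1 M2) :
    ¬ ∃ u1 u2 u3 u4 u5 : V, u1 ≠ u2 ∧ u1 ≠ u3 ∧ u1 ≠ u4 ∧ u1 ≠ u5 ∧ u2 ≠ u3 ∧
      u2 ≠ u4 ∧ u2 ≠ u5 ∧ u3 ≠ u4 ∧ u3 ≠ u5 ∧ u4 ≠ u5 ∧
      hatAdj G M1 M2 u1 u2 ∧ hatAdj G M1 M2 u2 u3 ∧ hatAdj G M1 M2 u3 u4 ∧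
      hatAdj G M1 M2 u4 u5 := by
  rintro ⟨u1, u2, u3, u4, u5, h12, h13, h14, h15, h23, h24, h25, h34, h35, h45,
    ⟨a12, b12⟩, ⟨a23, b23⟩, ⟨a34, b34⟩, ⟨a45, b45⟩⟩
  obtain ⟨h1, h2, hd, hm⟩ := hmax
  by_cases hc : ∃ e ∈ M1, u3 ∈ e
  · have hu3' : ¬ ∃ f ∈ M2, u3 ∈ f := by
      rintro ⟨f, hf, hxf⟩
      obtain ⟨e, he, hxe⟩ := hc
      refine not_both_cover hcubic h1 h2 hd a23.symm a34 h24 ?_ b34 he hf hxe hxf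
      rw [Sym2.eq_swap]
      exact b23
    have hm2 : ∀ N1 N2 : Set (Sym2 V), IsMatchingSet G N1 → IsMatchingSet G N2 →
        Disjoint N1 N2 → (N1 ∪ N2).ncard ≤ (M2 ∪ M1).ncard := by
      intro N1 N2 a b c
      rw [Set.union_comm M2 M1]
      exact hm N1 N2 a b c
    have sw : ∀ x y : V, s(x, y) ∉ M1 ∪ M2 → s(x, y) ∉ M2 ∪ M1 := by
      intro x y h hmem
      rcases hmem with h' | h'
      · exact h (Or.inr h')
      · exact h (Or.inl h')
    exact key G hcubic M2 M1 h2 h1 hd.symm hm2 h13 h23 h24 h34 h35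
      a12 (sw _ _ b12) a23 (sw _ _ b23) a34 (sw _ _ b34) a45 (sw _ _ b45) hu3'
  · exact key G hcubic M1 M2 h1 h2 hd hm h13 h23 h24 h34 h35
      a12 b12 a23 b23 a34 b34 a45 b45 hc
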